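/- An ordered semigroup S is left π-t-simple (i.e., there exists a left simple, π-regular subsemigroup H of S such that every a ∈ S has a power a^m ∈ H) if and only if for every a, b ∈ S there exists m ∈ ℕ such that a^m ∈ (a^m S b]. -/

import Mathlib

/-!  Common framework: an ordered semigroup is a semigroup with a partial
order compatible with multiplication on both sides.  `pw a n` denotes the
power `a^(n+1)` (so the index `n : ℕ` ranges over the positive exponents). -/

variable {S : Type*}

/-- `pw a n = a^(n+1)`. -/
def pw [Semigroup S] (a : S) : ℕ → S
  | 0 => a
  | n + 1 => pw a n * a

section Defs
variable [Semigroup S] [PartialOrder S]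

/-- ordered idempotent : `e ≤ e²`. -/
def OrdIdem (e : S) : Prop := e ≤ e * e

/-- `b` is an ordered inverse of `a` : `a ≤ aba` and `b ≤ bab`. -/
def OrdInv (a b : S) : Prop := a ≤ a * b * a ∧ b ≤ b * a * b

/-- regular element : `a ∈ (aSa]`. -/
def Regular (a : S) : Prop := ∃ x : S, a ≤ a * x * a

/-- π-regular : every element has a regular (positive) power. -/
def PiRegular (S : Type*) [Semigroup S] [PartialOrder S] : Prop :=
  ∀ a : S, ∃ m : ℕ, Regular (pw a m)

/-- principal left ideal `(a ∪ Sa]`. -/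
def Lset (a : S) : Set S := {x | x ≤ a ∨ ∃ s : S, x ≤ s * a}

/-- principal right ideal `(a ∪ aS]`. -/
def Rset (a : S) : Set S := {x | x ≤ a ∨ ∃ s : S, x ≤ a * s}

/-- Green's relation `L`. -/
def GreenL (a b : S) : Prop := Lset a = Lset b

/-- Green's relation `R`. -/
def GreenR (a b : S) : Prop := Rset a = Rset b

/-- `m` is the least index (i.e. `m+1` is the least positive exponent) with `a^(m+1)` regular. -/
def LeastReg (a : S) (m : ℕ) : Prop := Regular (pw a m) ∧ ∀ k < m, ¬ Regular (pw a k)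

/-- generalized Green relation `L*`. -/
def GreenLStar (a b : S) : Prop :=
  ∃ m n : ℕ, LeastReg a m ∧ LeastReg b n ∧ GreenL (pw a m) (pw b n)

/-- generalized Green relation `R*`. -/
def GreenRStar (a b : S) : Prop :=
  ∃ m n : ℕ, LeastReg a m ∧ LeastReg b n ∧ GreenR (pw a m) (pw b n)

end Defs


section Aux
variable [Semigroup S]

theorem pw_add (a : S) (i j : ℕ) : pw a i * pw a j = pw a (i + j + 1) := by
  induction j with
  | zero => rfl
  | succ j ih =>
      show pw a i * (pw a j * a) = pw a (i + j + 1 + 1)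
      rw [← mul_assoc, ih]
      rfl

theorem pw_succ' (a : S) (k : ℕ) : a * pw a k = pw a (k + 1) := by
  simpa [pw] using pw_add a 0 k

theorem pw_pw (a : S) (m k : ℕ) : pw (pw a m) k = pw a (k * m + k + m) := by
  induction k with
  | zero => simp [pw]
  | succ k ih =>
      show pw (pw a m) k * pw a m = _
      rw [ih, pw_add]
      congr 1
      ring

theorem pw_mem {H : Set S} (hmul : ∀ a ∈ H, ∀ b ∈ H, a * b ∈ H)
    (h : S) (hh : h ∈ H) : ∀ k : ℕ, pw h k ∈ H := by
  intro k
  induction k with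
  | zero => exact hh
  | succ k ih => exact hmul _ ih _ hh

end Aux

theorem stmt1 [Semigroup S] [PartialOrder S] [CovariantClass S S (· * ·) (· ≤ ·)]
    [CovariantClass S S (Function.swap (· * ·)) (· ≤ ·)] :
    (∃ H : Set S,
        (∀ a ∈ H, ∀ b ∈ H, a * b ∈ H) ∧
        (∀ a ∈ H, ∀ b ∈ H, ∃ h ∈ H, a ≤ h * b) ∧
        (∀ a ∈ H, ∃ m : ℕ, ∃ z ∈ H, pw a m ≤ pw a m * z * pw a m) ∧
        (∀ a : S, ∃ m : ℕ, pw a m ∈ H)) ↔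
      ∀ a b : S, ∃ (m : ℕ) (x : S), pw a m ≤ pw a m * x * b := by
  constructor
  · rintro ⟨H, hmul, hls, hpr, hpow⟩ a b
    obtain ⟨m₁, hm₁⟩ := hpow a
    obtain ⟨k, z, hzH, hz⟩ := hpr _ hm₁
    rw [pw_pw] at hz
    set M := k * m₁ + k + m₁ with hM
    have hcH : pw a M ∈ H := by
      rw [← pw_pw]
      exact pw_mem hmul _ hm₁ k
    obtain ⟨n, hn⟩ := hpow b
    have hzc : z * pw a M ∈ H := hmul _ hzH _ hcH
    obtain ⟨h, hhH, hh⟩ := hls _ hzc _ hn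
    have key : pw a M ≤ pw a M * (h * pw b n) := by
      calc pw a M ≤ pw a M * z * pw a M := hz
        _ = pw a M * (z * pw a M) := by rw [mul_assoc]
        _ ≤ pw a M * (h * pw b n) := mul_le_mul_right hh _
    cases n with
    | zero => exact ⟨M, h, by simpa [pw, mul_assoc] using key⟩
    | succ n' =>
        refine ⟨M, h * pw b n', ?_⟩
        have : pw b (n' + 1) = pw b n' * b := rfl
        rw [this] at key
        calc pw a M ≤ pw a M * (h * (pw b n' * b)) := key
          _ = pw a M * (h * pw b n') * b := by simp [mul_assoc]
  · intro hyp
    refine ⟨{h : S | ∀ b : S, ∃ x : S, h ≤ h * x * b}, ?_, ?_, ?_, ?_⟩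
    · -- closed under multiplication
      intro p hp q hq t
      obtain ⟨y, hy⟩ := hq t
      refine ⟨y, ?_⟩
      calc p * q ≤ p * (q * y * t) := mul_le_mul_right hy p
        _ = p * q * y * t := by simp [mul_assoc]
    · -- left simple
      intro p hp q hq
      obtain ⟨x, hx⟩ := hp (q * q)
      refine ⟨p * x * q, ?_, ?_⟩
      · intro t
        obtain ⟨u, hu⟩ := hq t
        refine ⟨u, ?_⟩
        calc p * x * q ≤ p * x * (q * u * t) := mul_le_mul_right hu _
          _ = p * x * q * u * t := by simp [mul_assoc]
      · simpa [mul_assoc] using hx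
    · -- π-regular
      intro p hp
      obtain ⟨y, hy⟩ := hp (p * p)
      refine ⟨0, y * p, ?_, ?_⟩
      · intro t
        obtain ⟨u, hu⟩ := hp t
        refine ⟨u, ?_⟩
        calc y * p ≤ y * (p * u * t) := mul_le_mul_right hu y
          _ = y * p * u * t := by simp [mul_assoc]
      · show p ≤ p * (y * p) * p
        calc p ≤ p * y * (p * p) := hy
          _ = p * (y * p) * p := by simp [mul_assoc]
    · -- every element has a power in H
      intro a
      obtain ⟨m, x, hx⟩ := hyp a a
      refine ⟨m, ?_⟩
      intro b
      have base : pw a m ≤ pw a m * (x * a) := by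
        simpa [mul_assoc] using hx
      have key : ∀ k : ℕ, pw a m ≤ pw a m * pw (x * a) k := by
        intro k
        induction k with
        | zero => exact base
        | succ k ih =>
            calc pw a m ≤ pw a m * pw (x * a) k := ih
              _ ≤ pw a m * (x * a) * pw (x * a) k := mul_le_mul_left base _
              _ = pw a m * ((x * a) * pw (x * a) k) := by rw [mul_assoc]
              _ = pw a m * pw (x * a) (k + 1) := by rw [pw_succ']
      obtain ⟨j, y, hy⟩ := hyp (x * a) b
      refine ⟨pw (x * a) j * y, ?_⟩
      calc pw a m ≤ pw a m * pw (x * a) j := key j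
        _ ≤ pw a m * (pw (x * a) j * y * b) := mul_le_mul_right hy _
        _ = pw a m * (pw (x * a) j * y) * b := by simp [mul_assoc]
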